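/- arXiv:1904.00219 — 2 statements merged into one kernel-verified Lean document; each statement's English description precedes it below -/
import Mathlib

section
/- Let r ∈ ℚ_{>1} \ ℕ with n(r) > 1 and d(r) > 1 (so S_r is atomic). For every nonzero x ∈ S_r that admits more than one factorization, L(x) has a minimum and a maximum, (n(r) − d(r)) divides max L(x) − min L(x), and L(x) = { min L(x) + k·(n(r) − d(r)) : k ∈ ℤ, 0 ≤ k ≤ (max L(x) − min L(x))/(n(r) − d(r)) }; in particular L(x) is an arithmetic progression with difference n(r) − d(r). -/
open Finsupp
open scoped ENNReal

/-- The Puiseux monoid (rational cyclic semiring) `S_r`, the additive submonoid of `ℚ`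
generated by the nonnegative powers of `r`. -/
def S (r : ℚ) : AddSubmonoid ℚ := AddSubmonoid.closure {x : ℚ | ∃ n : ℕ, x = r ^ n}

/-- A factorization of `x` over the powers of `r`: a finitely supported choice of
coefficients `α i` with `∑ α i * r ^ i = x`. -/
def IsFactorization (r x : ℚ) (α : ℕ →₀ ℕ) : Prop :=
  (α.sum fun i c => (c : ℚ) * r ^ i) = x

/-- The length of a factorization. -/
def flen (α : ℕ →₀ ℕ) : ℕ := α.sum fun _ c => c

/-- The set of lengths of factorizations of `x` over the powers of `r`. -/
def lengthSet (r x : ℚ) : Set ℕ :=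
  {t | ∃ α : ℕ →₀ ℕ, IsFactorization r x α ∧ flen α = t}

/-- An atom of `S_r`: a nonzero element that is not the sum of two nonzero elements. -/
def IsAtomS (r a : ℚ) : Prop :=
  a ∈ S r ∧ a ≠ 0 ∧ ¬ ∃ y z : ℚ, y ∈ S r ∧ z ∈ S r ∧ y ≠ 0 ∧ z ≠ 0 ∧ a = y + z

/-- The set of lengths of `x` as sums of atoms of `S_r`. -/
def atomLengthSet (r x : ℚ) : Set ℕ :=
  {t | ∃ f : Fin t → ℚ, (∀ i, IsAtomS r (f i)) ∧ ∑ i, f i = x}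

namespace SProof

def sE (r : ℚ) (f : ℕ →₀ ℕ) : ℚ := f.sum fun i c => (c : ℚ) * r ^ i

lemma sE_add (r : ℚ) (f g : ℕ →₀ ℕ) : sE r (f + g) = sE r f + sE r g :=
  Finsupp.sum_add_index' (fun _ => by simp) (fun a b₁ b₂ => by push_cast; ring)

lemma sE_single (r : ℚ) (i c : ℕ) : sE r (Finsupp.single i c) = (c : ℚ) * r ^ i :=
  Finsupp.sum_single_index (by simp)

lemma sE_zero (r : ℚ) : sE r 0 = 0 := Finsupp.sum_zero_index

lemma flen_add (f g : ℕ →₀ ℕ) : flen (f + g) = flen f + flen g :=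
  Finsupp.sum_add_index' (fun _ => rfl) (fun _ _ _ => rfl)

lemma flen_single (i c : ℕ) : flen (Finsupp.single i c) = c :=
  Finsupp.sum_single_index rfl

def D (f : ℕ →₀ ℕ) : ℕ := f.support.sup id

lemma mem_le_D {f : ℕ →₀ ℕ} {i : ℕ} (h : f i ≠ 0) : i ≤ D f :=
  Finset.le_sup (f := id) (Finsupp.mem_support_iff.mpr h)

lemma D_mem {f : ℕ →₀ ℕ} (h : f ≠ 0) : f (D f) ≠ 0 := by
  obtain ⟨b, hb, hbe⟩ := Finset.exists_mem_eq_sup f.support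
    (Finsupp.support_nonempty_iff.mpr h) id
  rw [D, hbe]
  exact Finsupp.mem_support_iff.mp hb

lemma supp_subset (f : ℕ →₀ ℕ) : f.support ⊆ Finset.range (D f + 1) := by
  intro i hi
  simp only [Finset.mem_range]
  exact Nat.lt_succ_of_le (Finset.le_sup (f := id) hi)

noncomputable def tail (f : ℕ →₀ ℕ) : ℕ →₀ ℕ := Finsupp.comapDomain Nat.succ f (Nat.succ_injective.injOn)

lemma tail_apply (f : ℕ →₀ ℕ) (j : ℕ) : tail f j = f (j + 1) := rfl

lemma decomp (f : ℕ →₀ ℕ) :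
    f = Finsupp.single 0 (f 0) + Finsupp.mapDomain Nat.succ (tail f) := by
  ext i
  cases i with
  | zero =>
    rw [Finsupp.add_apply, Finsupp.single_eq_same,
      Finsupp.mapDomain_notin_range _ _ (by simp [Set.range, Nat.succ_ne_zero])]
    simp
  | succ j =>
    rw [Finsupp.add_apply, Finsupp.single_eq_of_ne (by omega),
      Finsupp.mapDomain_apply Nat.succ_injective]
    simp [tail_apply]


section
variable {r : ℚ}

lemma num_cast (h1 : 1 < r) : ((r.num.toNat : ℕ) : ℚ) = (r.num : ℚ) := by
  have : (0:ℚ) < r := lt_trans one_pos h1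
  have h : 0 < r.num := Rat.num_pos.mpr this
  norm_cast
  omega

lemma dr_eq (h1 : 1 < r) : (r.den : ℚ) * r = ((r.num.toNat : ℕ) : ℚ) := by
  rw [num_cast h1]
  rw [mul_comm]
  exact_mod_cast Rat.mul_den_eq_num r

lemma den_lt_num (h1 : 1 < r) : r.den < r.num.toNat := by
  have hd : (0:ℚ) < (r.den : ℚ) := by positivity
  have : (r.den : ℚ) * 1 < (r.den : ℚ) * r := by
    exact mul_lt_mul_of_pos_left h1 hd
  rw [mul_one, dr_eq h1] at this
  exact_mod_cast this

/-- replace `n` copies of `r^i` by `den` copies of `r^(i+1)` -/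
def Step (r : ℚ) (γ δ : ℕ →₀ ℕ) : Prop :=
  ∃ γ₀ i, γ = γ₀ + Finsupp.single i r.num.toNat ∧ δ = γ₀ + Finsupp.single (i+1) r.den

def Move (r : ℚ) (γ δ : ℕ →₀ ℕ) : Prop := Step r γ δ ∨ Step r δ γ

lemma move_symm : Symmetric (Move r) := fun _ _ h => h.symm

lemma sE_step (h1 : 1 < r) {γ δ : ℕ →₀ ℕ} (h : Step r γ δ) : sE r γ = sE r δ := by
  obtain ⟨γ₀, i, hγ, hδ⟩ := h
  subst hγ; subst hδ
  rw [sE_add, sE_add, sE_single, sE_single]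
  have : ((r.den : ℕ) : ℚ) * r ^ (i + 1) = ((r.num.toNat : ℕ) : ℚ) * r ^ i := by
    rw [pow_succ, ← dr_eq h1]; ring
  rw [this]

lemma sE_move (h1 : 1 < r) {γ δ : ℕ →₀ ℕ} (h : Move r γ δ) : sE r γ = sE r δ := by
  rcases h with h | h
  · exact sE_step h1 h
  · exact (sE_step h1 h).symm

lemma flen_step {γ δ : ℕ →₀ ℕ} (h : Step r γ δ) :
    flen γ + r.den = flen δ + r.num.toNat := by
  obtain ⟨γ₀, i, hγ, hδ⟩ := h
  subst hγ; subst hδ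
  rw [flen_add, flen_add, flen_single, flen_single]
  ring

lemma flen_move {γ δ : ℕ →₀ ℕ} (h : Move r γ δ) :
    flen γ + r.den = flen δ + r.num.toNat ∨ flen δ + r.den = flen γ + r.num.toNat := by
  rcases h with h | h
  · exact Or.inl (flen_step h)
  · exact Or.inr (flen_step h)

lemma sE_rtg (h1 : 1 < r) {γ δ : ℕ →₀ ℕ} (h : Relation.ReflTransGen (Move r) γ δ) :
    sE r γ = sE r δ := by
  induction h with
  | refl => rfl
  | tail _ hm ih => exact ih.trans (sE_move h1 hm)

lemma dvd_rtg (h1 : 1 < r) {γ δ : ℕ →₀ ℕ} (h : Relation.ReflTransGen (Move r) γ δ) :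
    ((r.num.toNat - r.den : ℕ) : ℤ) ∣ (flen γ : ℤ) - (flen δ : ℤ) := by
  have hnd := den_lt_num h1
  induction h with
  | refl => simp
  | @tail b c hp hm ih =>
    have he : ((r.num.toNat - r.den : ℕ) : ℤ) = (r.num.toNat : ℤ) - (r.den : ℤ) := by
      push_cast [Nat.cast_sub hnd.le]; ring
    rcases flen_move hm with h | h
    · have h2 : (flen b : ℤ) - flen c = ((r.num.toNat - r.den : ℕ) : ℤ) := by
        rw [he]; omega
      have h3 : (flen γ : ℤ) - flen c = ((flen γ : ℤ) - flen b) + ((flen b : ℤ) - flen c) := by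
        ring
      rw [h3, h2]
      exact dvd_add ih dvd_rfl
    · have h2 : (flen b : ℤ) - flen c = -((r.num.toNat - r.den : ℕ) : ℤ) := by
        rw [he]; omega
      have h3 : (flen γ : ℤ) - flen c = ((flen γ : ℤ) - flen b) + ((flen b : ℤ) - flen c) := by
        ring
      rw [h3, h2]
      exact dvd_add ih (dvd_neg.mpr dvd_rfl)


lemma multiDown (t : ℕ) (γ₀ : ℕ →₀ ℕ) :
    Relation.ReflTransGen (Move r) (γ₀ + Finsupp.single 0 (t * r.num.toNat))
      (γ₀ + Finsupp.single 1 (t * r.den)) := by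
  induction t generalizing γ₀ with
  | zero => simpa using Relation.ReflTransGen.refl (a := γ₀)
  | succ t ih =>
    have e1 : γ₀ + Finsupp.single 0 ((t+1) * r.num.toNat)
        = (γ₀ + Finsupp.single 0 (t * r.num.toNat)) + Finsupp.single 0 r.num.toNat := by
      rw [add_mul, one_mul, Finsupp.single_add, add_assoc]
    have e2 : γ₀ + Finsupp.single 1 ((t+1) * r.den)
        = (γ₀ + Finsupp.single 1 r.den) + Finsupp.single 1 (t * r.den) := by
      rw [add_mul, one_mul, Finsupp.single_add]
      abel
    have hstep : Move r ((γ₀ + Finsupp.single 0 (t * r.num.toNat)) + Finsupp.single 0 r.num.toNat)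
        ((γ₀ + Finsupp.single 0 (t * r.num.toNat)) + Finsupp.single 1 r.den) :=
      Or.inl ⟨γ₀ + Finsupp.single 0 (t * r.num.toNat), 0, rfl, rfl⟩
    have e3 : (γ₀ + Finsupp.single 0 (t * r.num.toNat)) + Finsupp.single 1 r.den
        = (γ₀ + Finsupp.single 1 r.den) + Finsupp.single 0 (t * r.num.toNat) := by abel
    rw [e1, e2]
    exact Relation.ReflTransGen.head hstep (e3 ▸ ih (γ₀ + Finsupp.single 1 r.den))

/-- prepend a coefficient `c` at index 0 and shift everything up. -/
noncomputable def T (c : ℕ) (f : ℕ →₀ ℕ) : ℕ →₀ ℕ :=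
  Finsupp.single 0 c + Finsupp.mapDomain Nat.succ f

lemma decomp' (f : ℕ →₀ ℕ) : f = T (f 0) (tail f) := decomp f

lemma move_T (c : ℕ) {f g : ℕ →₀ ℕ} (h : Move r f g) : Move r (T c f) (T c g) := by
  have key : ∀ {f g : ℕ →₀ ℕ}, Step r f g → Step r (T c f) (T c g) := by
    rintro f g ⟨γ₀, i, hf, hg⟩
    subst hf; subst hg
    refine ⟨Finsupp.single 0 c + Finsupp.mapDomain Nat.succ γ₀, i + 1, ?_, ?_⟩ <;>
      rw [T, Finsupp.mapDomain_add, Finsupp.mapDomain_single] <;> abel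
  rcases h with h | h
  · exact Or.inl (key h)
  · exact Or.inr (key h)

lemma rtg_T (c : ℕ) {f g : ℕ →₀ ℕ} (h : Relation.ReflTransGen (Move r) f g) :
    Relation.ReflTransGen (Move r) (T c f) (T c g) :=
  Relation.ReflTransGen.lift (T c) (fun _ _ => move_T c) _ _ h

lemma sE_mapDomain (f : ℕ →₀ ℕ) : sE r (Finsupp.mapDomain Nat.succ f) = r * sE r f := by
  rw [sE, Finsupp.sum_mapDomain_index (by simp) (by intros; push_cast; ring)]
  rw [sE, Finsupp.mul_sum]
  apply Finsupp.sum_congr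
  intros i _
  rw [pow_succ]
  ring

lemma sE_T (c : ℕ) (f : ℕ →₀ ℕ) : sE r (T c f) = c + r * sE r f := by
  rw [T, sE_add, sE_single, sE_mapDomain]
  simp

lemma flen_T (c : ℕ) (f : ℕ →₀ ℕ) : flen (T c f) = c + flen f := by
  rw [T, flen_add, flen_single, flen]
  rw [Finsupp.sum_mapDomain_index (fun _ => rfl) (fun _ _ _ => rfl)]
  rfl

lemma sE_nonneg (h0 : 0 < r) (f : ℕ →₀ ℕ) : 0 ≤ sE r f :=
  Finset.sum_nonneg fun i _ => by positivity

lemma sE_eq_zero (h0 : 0 < r) {f : ℕ →₀ ℕ} (h : sE r f = 0) : f = 0 := by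
  ext i
  by_contra hi
  have hmem : i ∈ f.support := Finsupp.mem_support_iff.mpr hi
  have hpos : (0:ℚ) < (f i : ℚ) * r ^ i := by
    have : 0 < f i := Nat.pos_of_ne_zero hi
    positivity
  have hle : (f i : ℚ) * r ^ i ≤ sE r f :=
    Finset.single_le_sum (f := fun j => (f j : ℚ) * r ^ j)
      (fun j _ => by positivity) hmem
  rw [h] at hle
  linarith

lemma flen_le_sE (h1 : 1 < r) (f : ℕ →₀ ℕ) : (flen f : ℚ) ≤ sE r f := by
  rw [flen, sE]
  rw [Finsupp.sum, Finsupp.sum, Nat.cast_sum]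
  apply Finset.sum_le_sum
  intro i _
  have : (1:ℚ) ≤ r ^ i := one_le_pow₀ h1.le
  nlinarith [Nat.cast_nonneg (α := ℚ) (f i)]


lemma sE_range (f : ℕ →₀ ℕ) {N : ℕ} (h : f.support ⊆ Finset.range (N+1)) :
    sE r f = ∑ i ∈ Finset.range (N+1), (f i : ℚ) * r ^ i :=
  Finsupp.sum_of_support_subset f h _ (fun i _ => by simp)

lemma term_cast (h1 : 1 < r) (c : ℕ) {i N : ℕ} (hi : i ≤ N) :
    ((c * r.num.toNat ^ i * r.den ^ (N - i) : ℕ) : ℚ)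
      = (c : ℚ) * r ^ i * (r.den : ℚ) ^ N := by
  have hdN : (r.den : ℚ) ^ N = (r.den : ℚ) ^ i * (r.den : ℚ) ^ (N - i) := by
    rw [← pow_add]
    congr 1
    omega
  have hni : ((r.num.toNat : ℕ) : ℚ) ^ i = r ^ i * (r.den : ℚ) ^ i := by
    rw [← mul_pow, mul_comm, dr_eq h1]
  push_cast
  rw [hdN, hni]
  ring

lemma cong_mod (h1 : 1 < r) {α β : ℕ →₀ ℕ} (h : sE r α = sE r β) :
    (α 0 : ZMod r.num.toNat) = (β 0 : ZMod r.num.toNat) := by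
  set n := r.num.toNat with hn
  set d := r.den with hdd
  set N := max (D α) (D β) with hN
  have hsa : α.support ⊆ Finset.range (N+1) :=
    (supp_subset α).trans (Finset.range_subset_range.mpr (Nat.succ_le_succ (le_max_left _ _)))
  have hsb : β.support ⊆ Finset.range (N+1) :=
    (supp_subset β).trans (Finset.range_subset_range.mpr (Nat.succ_le_succ (le_max_right _ _)))
  have hq : ((∑ i ∈ Finset.range (N+1), α i * n ^ i * d ^ (N - i) : ℕ) : ℚ)
      = ((∑ i ∈ Finset.range (N+1), β i * n ^ i * d ^ (N - i) : ℕ) : ℚ) := by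
    have hmul := congrArg (· * ((d : ℚ)) ^ N) h
    rw [sE_range α hsa, sE_range β hsb, Finset.sum_mul, Finset.sum_mul] at hmul
    rw [Nat.cast_sum, Nat.cast_sum]
    calc ∑ i ∈ Finset.range (N+1), ((α i * n ^ i * d ^ (N - i) : ℕ) : ℚ)
        = ∑ i ∈ Finset.range (N+1), (α i : ℚ) * r ^ i * (d:ℚ) ^ N := by
          apply Finset.sum_congr rfl
          intro i hi
          exact term_cast h1 _ (by simpa [Nat.lt_succ_iff] using hi)
      _ = ∑ i ∈ Finset.range (N+1), (β i : ℚ) * r ^ i * (d:ℚ) ^ N := hmul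
      _ = _ := by
          apply Finset.sum_congr rfl
          intro i hi
          exact (term_cast h1 _ (by simpa [Nat.lt_succ_iff] using hi)).symm
  have hNat : (∑ i ∈ Finset.range (N+1), α i * n ^ i * d ^ (N - i))
      = (∑ i ∈ Finset.range (N+1), β i * n ^ i * d ^ (N - i)) := by
    exact_mod_cast hq
  have hz := congrArg (Nat.cast : ℕ → ZMod n) hNat
  have hred : ∀ f : ℕ →₀ ℕ, ((∑ i ∈ Finset.range (N+1), f i * n ^ i * d ^ (N - i) : ℕ) : ZMod n)
      = (f 0 : ZMod n) * (d : ZMod n) ^ N := by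
    intro f
    rw [Nat.cast_sum, Finset.sum_range_succ']
    have : ∀ i ∈ Finset.range N, ((f (i+1) * n ^ (i+1) * d ^ (N - (i+1)) : ℕ) : ZMod n) = 0 := by
      intro i _
      push_cast
      rw [pow_succ]
      simp [ZMod.natCast_self]
    rw [Finset.sum_congr rfl this]
    push_cast
    simp
  rw [hred α, hred β] at hz
  have hcop : Nat.Coprime d n := by
    have := r.reduced
    have hpos : 0 < r.num := Rat.num_pos.mpr (lt_trans one_pos h1)
    have hnn : n = r.num.natAbs := by rw [hn]; omega
    rw [hnn, hdd]
    exact (Nat.coprime_comm.mp this)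
  have hu : IsUnit ((d : ZMod n) ^ N) := by
    apply IsUnit.pow
    exact (ZMod.isUnit_iff_coprime d n).mpr hcop
  exact hu.mul_right_cancel hz

lemma exists_t (h1 : 1 < r) {α β : ℕ →₀ ℕ} (h : sE r α = sE r β) (h0 : β 0 ≤ α 0) :
    ∃ t : ℕ, α 0 = β 0 + t * r.num.toNat := by
  have := cong_mod h1 h
  have hmod : α 0 ≡ β 0 [MOD r.num.toNat] := (ZMod.natCast_eq_natCast_iff _ _ _).mp this
  have hdvd : r.num.toNat ∣ α 0 - β 0 := (Nat.modEq_iff_dvd' h0).mp hmod.symm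
  obtain ⟨t, ht⟩ := hdvd
  exact ⟨t, by rw [mul_comm] at ht; omega⟩


lemma connect (h1 : 1 < r) : ∀ (k : ℕ) (α β : ℕ →₀ ℕ), D α + D β ≤ k → sE r α = sE r β →
    Relation.ReflTransGen (Move r) α β := by
  have hr0 : (0:ℚ) < r := lt_trans one_pos h1
  intro k
  induction k using Nat.strong_induction_on with
  | _ k ih =>
    have core : ∀ γ δ : ℕ →₀ ℕ, D γ + D δ ≤ k → sE r γ = sE r δ → δ 0 ≤ γ 0 →
        Relation.ReflTransGen (Move r) γ δ := by
      intro γ δ hk hsum h0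
      obtain ⟨t, ht⟩ := exists_t h1 hsum h0
      set a := tail γ with ha
      set b := tail δ with hb
      set a' := a + Finsupp.single 0 (t * r.den) with ha'
      have hγ : γ = (Finsupp.single 0 (δ 0) + Finsupp.mapDomain Nat.succ a)
          + Finsupp.single 0 (t * r.num.toNat) := by
        conv_lhs => rw [decomp γ]
        rw [ht, Finsupp.single_add]
        abel
      have hE : (Finsupp.single 0 (δ 0) + Finsupp.mapDomain Nat.succ a)
          + Finsupp.single 1 (t * r.den) = T (δ 0) a' := by
        rw [T, ha', Finsupp.mapDomain_add, Finsupp.mapDomain_single]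
        abel
      have path1 : Relation.ReflTransGen (Move r) γ (T (δ 0) a') := by
        rw [hγ, ← hE]
        exact multiDown t _
      have hδT : δ = T (δ 0) b := decomp' δ
      have hsE : sE r (T (δ 0) a') = sE r (T (δ 0) b) := by
        rw [← sE_rtg h1 path1, hsum, ← hδT]
      have hsum' : sE r a' = sE r b := by
        rw [sE_T, sE_T] at hsE
        have := add_left_cancel hsE
        exact mul_left_cancel₀ (ne_of_gt hr0) this
      by_cases hbz : b = 0
      · have ha'z : a' = 0 := sE_eq_zero hr0 (by rw [hsum', hbz, sE_zero])
        rw [hδT, hbz, ← ha'z]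
        exact path1
      · have hDb : D b + 1 ≤ D δ := by
          have h2 : b (D b) ≠ 0 := D_mem hbz
          have h3 : δ (D b + 1) ≠ 0 := by rwa [tail_apply] at h2
          exact mem_le_D h3
        have hDa : D a' ≤ D γ := by
          by_cases haz : a' = 0
          · simp [haz, D]
          · have h2 : a' (D a') ≠ 0 := D_mem haz
            rcases Nat.eq_zero_or_pos (D a') with h3 | h3
            · omega
            · have h4 : a' (D a') = a (D a') := by
                rw [ha', Finsupp.add_apply, Finsupp.single_eq_of_ne' (by omega : (0:ℕ) ≠ D a'), add_zero]
              rw [h4, tail_apply] at h2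
              have := mem_le_D h2
              omega
        have hrec := ih (k-1) (by omega) a' b (by omega) hsum'
        have path2 := rtg_T (r := r) (δ 0) hrec
        rw [hδT]
        exact path1.trans path2
    intro α β hk hsum
    rcases le_total (β 0) (α 0) with hc | hc
    · exact core α β hk hsum hc
    · haveI : Std.Symm (Move r) := ⟨fun _ _ h => move_symm h⟩
      exact Std.Symm.symm _ _
        (core β α (by omega) hsum.symm hc)


lemma ivt (h1 : 1 < r) {x : ℚ} {γ δ : ℕ →₀ ℕ} (h : Relation.ReflTransGen (Move r) γ δ) :
    sE r γ = x → ∀ j : ℕ, flen γ + j * (r.num.toNat - r.den) ≤ flen δ →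
      ∃ ε : ℕ →₀ ℕ, sE r ε = x ∧ flen ε = flen γ + j * (r.num.toNat - r.den) := by
  have hnd := den_lt_num h1
  induction h using Relation.ReflTransGen.head_induction_on with
  | refl =>
    intro hfa j hj
    have h0 : j * (r.num.toNat - r.den) ≤ 0 :=
      Nat.le_of_add_le_add_left (hj.trans_eq (add_zero _).symm)
    exact ⟨δ, hfa, by rw [Nat.eq_zero_of_le_zero h0, add_zero]⟩
  | @head a c hm hp ih =>
    intro hfa j hj
    have hfc : sE r c = x := by rw [← sE_move h1 hm]; exact hfa
    rcases flen_move hm with hh | hh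
    · -- flen a = flen c + e  (length drops along the move)
      have hac : flen a = flen c + (r.num.toNat - r.den) := by omega
      have key : flen a + j * (r.num.toNat - r.den)
          = flen c + (j+1) * (r.num.toNat - r.den) := by rw [hac]; ring
      obtain ⟨ε, hε, hεl⟩ := ih hfc (j+1) (key ▸ hj)
      exact ⟨ε, hε, by rw [hεl, ← key]⟩
    · -- flen c = flen a + e
      have hca : flen c = flen a + (r.num.toNat - r.den) := by omega
      cases j with
      | zero => exact ⟨a, hfa, by rw [zero_mul, add_zero]⟩
      | succ j =>
        have key : flen a + (j+1) * (r.num.toNat - r.den)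
            = flen c + j * (r.num.toNat - r.den) := by rw [hca]; ring
        obtain ⟨ε, hε, hεl⟩ := ih hfc j (key ▸ hj)
        exact ⟨ε, hε, by rw [hεl, ← key]⟩

end
end SProof

lemma isFact_iff (r x : ℚ) (f : ℕ →₀ ℕ) : IsFactorization r x f ↔ SProof.sE r f = x :=
  Iff.rfl

theorem stmt1 (r : ℚ) (h1 : 1 < r) (hd : r.den ≠ 1)
    (x : ℚ) (hx : x ∈ S r) (hx0 : x ≠ 0)
    (hm : ∃ α β : ℕ →₀ ℕ, IsFactorization r x α ∧ IsFactorization r x β ∧ α ≠ β) :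
    ∃ m M : ℕ, IsLeast (lengthSet r x) m ∧ IsGreatest (lengthSet r x) M ∧
      (r.num.toNat - r.den) ∣ (M - m) ∧
      lengthSet r x = {t : ℕ | ∃ k : ℕ,
        k ≤ (M - m) / (r.num.toNat - r.den) ∧ t = m + k * (r.num.toNat - r.den)} := by
  classical
  obtain ⟨α, β, hα, hβ, hne⟩ := hm
  clear hne hx hx0 hd
  have hnd := SProof.den_lt_num h1
  rw [isFact_iff] at hα hβ
  -- the length set is nonempty and bounded above
  have hxne : (lengthSet r x).Nonempty := ⟨flen α, α, hα, rfl⟩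
  have hbdd : BddAbove (lengthSet r x) := by
    refine ⟨⌈x⌉₊, fun ℓ hℓ => ?_⟩
    obtain ⟨φ, hφ, rfl⟩ := hℓ
    rw [isFact_iff] at hφ
    have h2 : (flen φ : ℚ) ≤ x := by rw [← hφ]; exact SProof.flen_le_sE h1 φ
    exact_mod_cast h2.trans (Nat.le_ceil x)
  set m := sInf (lengthSet r x) with hm'
  set M := sSup (lengthSet r x) with hM'
  have hmmem : m ∈ lengthSet r x := Nat.sInf_mem hxne
  have hMmem : M ∈ lengthSet r x := Nat.sSup_mem hxne hbdd
  have hmM : m ≤ M := Nat.sInf_le hMmem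
  obtain ⟨μ, hμ, hμl⟩ := id hmmem
  obtain ⟨ν, hν, hνl⟩ := id hMmem
  rw [isFact_iff] at hμ hν
  have conn : ∀ γ δ : ℕ →₀ ℕ, SProof.sE r γ = x → SProof.sE r δ = x →
      Relation.ReflTransGen (SProof.Move r) γ δ :=
    fun γ δ hγ hδ =>
      SProof.connect h1 (SProof.D γ + SProof.D δ) γ δ le_rfl (by rw [hγ, hδ])
  have hdvd : ∀ γ δ : ℕ →₀ ℕ, SProof.sE r γ = x → SProof.sE r δ = x → flen γ ≤ flen δ →
      (r.num.toNat - r.den) ∣ (flen δ - flen γ) := by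
    intro γ δ hγ hδ hle
    have h3 := SProof.dvd_rtg h1 (conn δ γ hδ hγ)
    have h4 : ((r.num.toNat - r.den : ℕ) : ℤ) ∣ ((flen δ - flen γ : ℕ) : ℤ) := by
      rwa [Nat.cast_sub hle]
    exact_mod_cast h4
  have hdvdMm : (r.num.toNat - r.den) ∣ (M - m) := by
    have := hdvd μ ν hμ hν (by rw [hμl, hνl]; exact hmM)
    rwa [hμl, hνl] at this
  refine ⟨m, M, ⟨hmmem, fun b hb => Nat.sInf_le hb⟩, ⟨hMmem, fun b hb => le_csSup hbdd hb⟩,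
    hdvdMm, ?_⟩
  ext ℓ
  constructor
  · rintro ⟨φ, hφ, rfl⟩
    rw [isFact_iff] at hφ
    have hml : m ≤ flen φ := Nat.sInf_le ⟨φ, hφ, rfl⟩
    have hMl : flen φ ≤ M := le_csSup hbdd ⟨φ, hφ, rfl⟩
    have hd1 : (r.num.toNat - r.den) ∣ (flen φ - m) := by
      have := hdvd μ φ hμ hφ (by rw [hμl]; exact hml)
      rwa [hμl] at this
    refine ⟨(flen φ - m) / (r.num.toNat - r.den), ?_, ?_⟩
    · exact Nat.div_le_div_right (by omega)
    · rw [Nat.div_mul_cancel hd1]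
      omega
  · rintro ⟨k, hk, rfl⟩
    have hkb : k * (r.num.toNat - r.den) ≤ M - m := by
      calc k * (r.num.toNat - r.den)
          ≤ ((M - m) / (r.num.toNat - r.den)) * (r.num.toNat - r.den) :=
            Nat.mul_le_mul_right _ hk
        _ ≤ M - m := Nat.div_mul_le_self _ _
    have hbound : flen μ + k * (r.num.toNat - r.den) ≤ flen ν := by
      rw [hμl, hνl]
      generalize k * (r.num.toNat - r.den) = p at hkb ⊢
      omega
    obtain ⟨ε, hε, hεl⟩ := SProof.ivt h1 (conn μ ν hμ hν) hμ k hbound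
    exact ⟨ε, hε, by rw [hεl, hμl]⟩
end

section
/- Let r ∈ ℚ_{>0} \ ℕ with n(r) > 1 (so d(r) > 1 and S_r is atomic). Then the catenary degree of S_r equals max{ n(r), d(r) }; moreover, for every x ∈ S_r with c(x) > 0 one has c(x) = max{ n(r), d(r) }, i.e., the set of positive catenary degrees of S_r is the singleton { max{ n(r), d(r) } }. -/
open Finsupp
open scoped ENNReal

/-- The greatest common divisor of two factorizations. -/
noncomputable def fgcd (α β : ℕ →₀ ℕ) : ℕ →₀ ℕ := Finsupp.zipWith min (min_self 0) α β

/-- The distance between two factorizations. -/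
noncomputable def fdist (α β : ℕ →₀ ℕ) : ℕ :=
  max (flen α - flen (fgcd α β)) (flen β - flen (fgcd α β))

/-- There is an `N`-chain of factorizations of `x` connecting `α` and `β`. -/
def HasChain (r x : ℚ) (N : ℕ) (α β : ℕ →₀ ℕ) : Prop :=
  ∃ (k : ℕ) (z : Fin (k + 1) → ℕ →₀ ℕ), z 0 = α ∧ z (Fin.last k) = β ∧
    (∀ i, IsFactorization r x (z i)) ∧
    ∀ i : Fin k, fdist (z i.castSucc) (z i.succ) ≤ N

/-- The catenary degree of `x` in `S_r`. -/
noncomputable def catenary (r x : ℚ) : ℕ∞ :=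
  sInf {N : ℕ∞ | ∃ n : ℕ, N = n ∧ ∀ α β : ℕ →₀ ℕ,
    IsFactorization r x α → IsFactorization r x β → HasChain r x n α β}

section Basic

variable {r x : ℚ}

lemma flen_eq_sum {α : ℕ →₀ ℕ} {s : Finset ℕ} (hs : α.support ⊆ s) :
    flen α = ∑ t ∈ s, α t :=
  Finsupp.sum_of_support_subset α hs _ (fun _ _ => rfl)

lemma fgcd_apply (α β : ℕ →₀ ℕ) (t : ℕ) : fgcd α β t = min (α t) (β t) := rfl

lemma fgcd_support (α β : ℕ →₀ ℕ) : (fgcd α β).support ⊆ α.support ∪ β.support :=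
  Finsupp.support_zipWith

lemma isFact_iff_sum_range {α : ℕ →₀ ℕ} {K : ℕ} (hK : ∀ t, K ≤ t → α t = 0) :
    IsFactorization r x α ↔ ∑ t ∈ Finset.range K, (α t : ℚ) * r ^ t = x := by
  unfold IsFactorization
  rw [Finsupp.sum_of_support_subset α (s := Finset.range K) ?_ _ (fun _ _ => by simp)]
  intro t ht
  simp only [Finsupp.mem_support_iff] at ht
  simp only [Finset.mem_range]
  by_contra h
  exact ht (hK t (le_of_not_gt h))

lemma support_bound (α : ℕ →₀ ℕ) {K : ℕ} (hK : α.support ⊆ Finset.range K) :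
    ∀ t, K ≤ t → α t = 0 := by
  intro t ht
  by_contra h
  have := hK (Finsupp.mem_support_iff.2 h)
  simp only [Finset.mem_range] at this
  omega

end Basic
section Arith

variable {r x : ℚ}

lemma num_toNat_cast (h0 : 0 < r) : ((r.num.toNat : ℤ) : ℚ) = (r.num : ℚ) := by
  have h := Int.toNat_of_nonneg (le_of_lt (Rat.num_pos.2 h0))
  exact_mod_cast congrArg (fun z : ℤ => (z : ℚ)) h

lemma r_eq (h0 : 0 < r) : ((r.den : ℚ)) * r = (r.num.toNat : ℚ) := by
  have h := num_toNat_cast h0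
  push_cast at h
  rw [h]
  have hd0 : (r.den : ℚ) ≠ 0 := by exact_mod_cast r.den_nz
  have h2 : r = (r.num : ℚ) / (r.den : ℚ) := (Rat.num_div_den r).symm
  nth_rewrite 2 [h2]
  rw [mul_comm, div_mul_cancel₀ _ hd0]

lemma key_rel (h0 : 0 < r) (i : ℕ) :
    (r.num.toNat : ℚ) * r ^ i = (r.den : ℚ) * r ^ (i + 1) := by
  rw [pow_succ, ← mul_assoc, mul_comm ((r.den : ℚ)) (r ^ i), mul_assoc, r_eq h0, mul_comm]

lemma pow_rel (h0 : 0 < r) (t : ℕ) :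
    r ^ t * (r.den : ℚ) ^ t = (r.num.toNat : ℚ) ^ t := by
  rw [← mul_pow, mul_comm, r_eq h0]

lemma term_cast (h0 : 0 < r) {t K : ℕ} (ht : t < K) (c : ℕ) :
    ((c * r.num.toNat ^ t * r.den ^ (K - 1 - t) : ℕ) : ℚ)
      = (c : ℚ) * r ^ t * (r.den : ℚ) ^ (K - 1) := by
  have hKt : K - 1 = t + (K - 1 - t) := by omega
  push_cast
  nth_rewrite 2 [hKt]
  rw [pow_add, ← mul_assoc ((c:ℚ) * r ^ t), mul_assoc (c:ℚ) (r ^ t), pow_rel h0]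

lemma int_sum_eq (h0 : 0 < r) {α β : ℕ →₀ ℕ} {K : ℕ}
    (hα : ∀ t, K ≤ t → α t = 0) (hβ : ∀ t, K ≤ t → β t = 0)
    (hfα : IsFactorization r x α) (hfβ : IsFactorization r x β) :
    ∑ t ∈ Finset.range K, (α t : ℤ) * (r.num.toNat : ℤ) ^ t * (r.den : ℤ) ^ (K - 1 - t)
      = ∑ t ∈ Finset.range K, (β t : ℤ) * (r.num.toNat : ℤ) ^ t * (r.den : ℤ) ^ (K - 1 - t) := by
  have hq : ∀ γ : ℕ →₀ ℕ, (∀ t, K ≤ t → γ t = 0) → IsFactorization r x γ →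
      ((∑ t ∈ Finset.range K, γ t * r.num.toNat ^ t * r.den ^ (K - 1 - t) : ℕ) : ℚ)
        = x * (r.den : ℚ) ^ (K - 1) := by
    intro γ hγ hfγ
    rw [← (isFact_iff_sum_range hγ).1 hfγ, Finset.sum_mul]
    push_cast
    refine Finset.sum_congr rfl (fun t ht => ?_)
    have := term_cast h0 (Finset.mem_range.1 ht) (γ t)
    push_cast at this
    exact this
  have h1 := hq α hα hfα
  have h2 := hq β hβ hfβ
  have h3 : ((∑ t ∈ Finset.range K, α t * r.num.toNat ^ t * r.den ^ (K - 1 - t) : ℕ) : ℚ)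
      = ((∑ t ∈ Finset.range K, β t * r.num.toNat ^ t * r.den ^ (K - 1 - t) : ℕ) : ℚ) := by
    rw [h1, h2]
  have hnn : (∑ t ∈ Finset.range K, α t * r.num.toNat ^ t * r.den ^ (K - 1 - t) : ℕ)
      = (∑ t ∈ Finset.range K, β t * r.num.toNat ^ t * r.den ^ (K - 1 - t) : ℕ) := by
    exact_mod_cast h3
  exact_mod_cast congrArg (Nat.cast (R := ℤ)) hnn

end Arith
section Dvd

variable {r x : ℚ}

lemma coprime_nd (h0 : 0 < r) : Nat.Coprime r.num.toNat r.den := by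
  have h := r.reduced
  have h9 : (0:ℤ) < r.num := Rat.num_pos.2 h0
  have h2 : r.num.natAbs = r.num.toNat := by omega
  rwa [h2] at h

/-- A bound beyond which a finsupp vanishes. -/
lemma exists_bound (α β : ℕ →₀ ℕ) (m : ℕ) : ∃ K, m < K ∧ (∀ t, K ≤ t → α t = 0)
    ∧ (∀ t, K ≤ t → β t = 0) := by
  refine ⟨m + 1 + α.support.sup id + β.support.sup id, by omega, ?_, ?_⟩ <;>
  · intro t ht
    by_contra h
    have := Finset.le_sup (f := id) (Finsupp.mem_support_iff.2 h)
    simp only [id] at this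
    omega

lemma dvd_min_diff (h0 : 0 < r) {α β : ℕ →₀ ℕ}
    (hfα : IsFactorization r x α) (hfβ : IsFactorization r x β) {i : ℕ}
    (hlow : ∀ t, t < i → α t = β t) :
    ((r.num.toNat : ℤ)) ∣ (α i : ℤ) - β i := by
  set N : ℤ := (r.num.toNat : ℤ) with hN
  set D : ℤ := (r.den : ℤ) with hD
  obtain ⟨K, hiK, hα, hβ⟩ := exists_bound α β i
  have E := int_sum_eq h0 hα hβ hfα hfβ
  set g : ℕ → ℤ := fun t => ((α t : ℤ) - β t) * N ^ t * D ^ (K - 1 - t) with hg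
  have hsum : ∑ t ∈ Finset.range K, g t = 0 := by
    simp only [hg, sub_mul, Finset.sum_sub_distrib]
    rw [E, sub_self]
  have hsplit : ∑ t ∈ Finset.range (i+1), g t + ∑ t ∈ Finset.Ico (i+1) K, g t = 0 := by
    rw [Finset.range_eq_Ico, Finset.sum_Ico_consecutive g (Nat.zero_le _) hiK,
      ← Finset.range_eq_Ico]
    exact hsum
  have hlowsum : ∑ t ∈ Finset.range i, g t = 0 := by
    refine Finset.sum_eq_zero (fun t ht => ?_)
    simp only [hg, hlow t (Finset.mem_range.1 ht), sub_self, zero_mul]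
  have hgi : g i = - ∑ t ∈ Finset.Ico (i+1) K, g t := by
    have := hsplit
    rw [Finset.sum_range_succ, hlowsum, zero_add] at this
    linarith
  have hdvd : N ^ (i+1) ∣ g i := by
    rw [hgi]
    refine dvd_neg.2 (Finset.dvd_sum (fun t ht => ?_))
    have ht1 : i + 1 ≤ t := (Finset.mem_Ico.1 ht).1
    exact dvd_trans (pow_dvd_pow N ht1)
      ⟨((α t : ℤ) - β t) * D ^ (K - 1 - t), by ring⟩
  have hN0 : N ≠ 0 := by
    have h9 : (0:ℤ) < r.num := Rat.num_pos.2 h0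
    have h10 : ((r.num.toNat : ℤ)) = r.num := Int.toNat_of_nonneg h9.le
    rw [hN, h10]
    exact h9.ne' 
  have hdvd2 : N ^ i * N ∣ N ^ i * (((α i : ℤ) - β i) * D ^ (K - 1 - i)) := by
    rw [← pow_succ]
    have heq : g i = N ^ i * (((α i : ℤ) - β i) * D ^ (K - 1 - i)) := by rw [hg]; ring
    rw [← heq]
    exact hdvd
  have h3 : N ∣ ((α i : ℤ) - β i) * D ^ (K - 1 - i) :=
    (mul_dvd_mul_iff_left (pow_ne_zero i hN0)).1 hdvd2
  have hco : IsCoprime N (D ^ (K - 1 - i)) :=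
    (Nat.isCoprime_iff_coprime.2 (coprime_nd h0)).pow_right
  exact hco.dvd_of_dvd_mul_right h3

lemma dvd_max_diff (h0 : 0 < r) {α β : ℕ →₀ ℕ}
    (hfα : IsFactorization r x α) (hfβ : IsFactorization r x β) {j : ℕ}
    (hhigh : ∀ t, j < t → α t = β t) :
    ((r.den : ℤ)) ∣ (α j : ℤ) - β j := by
  set N : ℤ := (r.num.toNat : ℤ) with hN
  set D : ℤ := (r.den : ℤ) with hD
  obtain ⟨K, hjK, hα, hβ⟩ := exists_bound α β j
  have E := int_sum_eq h0 hα hβ hfα hfβ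
  set g : ℕ → ℤ := fun t => ((α t : ℤ) - β t) * N ^ t * D ^ (K - 1 - t) with hg
  have hsum : ∑ t ∈ Finset.range K, g t = 0 := by
    simp only [hg, sub_mul, Finset.sum_sub_distrib]
    rw [E, sub_self]
  have hhighsum : ∑ t ∈ Finset.Ico (j+1) K, g t = 0 := by
    refine Finset.sum_eq_zero (fun t ht => ?_)
    simp only [hg, hhigh t (Finset.mem_Ico.1 ht).1, sub_self, zero_mul]
  have hgj : g j = - ∑ t ∈ Finset.range j, g t := by
    have h2 : ∑ t ∈ Finset.range (j+1), g t + ∑ t ∈ Finset.Ico (j+1) K, g t = 0 := by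
      rw [Finset.range_eq_Ico, Finset.sum_Ico_consecutive g (Nat.zero_le _) hjK,
        ← Finset.range_eq_Ico]
      exact hsum
    rw [Finset.sum_range_succ, hhighsum] at h2
    linarith
  have hdvd : D ^ (K - j) ∣ g j := by
    rw [hgj]
    refine dvd_neg.2 (Finset.dvd_sum (fun t ht => ?_))
    have ht1 : t < j := Finset.mem_range.1 ht
    have hle : K - j ≤ K - 1 - t := by omega
    exact dvd_trans (pow_dvd_pow D hle)
      ⟨((α t : ℤ) - β t) * N ^ t, by ring⟩
  have hD0 : D ≠ 0 := by
    rw [hD]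
    exact_mod_cast r.den_nz
  have hdvd2 : D ^ (K - 1 - j) * D ∣ D ^ (K - 1 - j) * (((α j : ℤ) - β j) * N ^ j) := by
    have hKj : K - j = (K - 1 - j) + 1 := by omega
    have heq : g j = D ^ (K - 1 - j) * (((α j : ℤ) - β j) * N ^ j) := by rw [hg]; ring
    rw [← pow_succ, ← hKj, ← heq]
    exact hdvd
  have h3 : D ∣ ((α j : ℤ) - β j) * N ^ j :=
    (mul_dvd_mul_iff_left (pow_ne_zero _ hD0)).1 hdvd2
  have hco : IsCoprime D (N ^ j) :=
    (Nat.isCoprime_iff_coprime.2 (coprime_nd h0).symm).pow_right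
  exact hco.dvd_of_dvd_mul_right h3

lemma eq_of_agree_pos {α β : ℕ →₀ ℕ}
    (hfα : IsFactorization r x α) (hfβ : IsFactorization r x β)
    (h : ∀ t, 0 < t → α t = β t) : α = β := by
  obtain ⟨K, hK0, hα, hβ⟩ := exists_bound α β 0
  obtain ⟨K', rfl⟩ : ∃ K', K = K' + 1 := ⟨K - 1, by omega⟩
  have h1 := (isFact_iff_sum_range (r := r) (x := x) hα).1 hfα
  have h2 := (isFact_iff_sum_range (r := r) (x := x) hβ).1 hfβ
  rw [Finset.sum_range_succ'] at h1 h2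
  have hsh : ∑ t ∈ Finset.range K', (α (t+1) : ℚ) * r ^ (t+1)
      = ∑ t ∈ Finset.range K', (β (t+1) : ℚ) * r ^ (t+1) :=
    Finset.sum_congr rfl (fun t _ => by rw [h (t+1) (Nat.succ_pos t)])
  rw [hsh, ← h2] at h1
  have h0eq : (α 0 : ℚ) = (β 0 : ℚ) := by
    have := add_left_cancel h1
    simpa using this
  have h0n : α 0 = β 0 := by exact_mod_cast h0eq
  ext t
  rcases Nat.eq_zero_or_pos t with rfl | ht
  · exact h0n
  · exact h t ht

end Dvd
section Exch

variable {r x : ℚ}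

lemma flen_add (α β : ℕ →₀ ℕ) : flen (α + β) = flen α + flen β := by
  unfold flen
  exact Finsupp.sum_add_index' (fun _ => rfl) (fun _ _ _ => rfl)

lemma flen_single (i c : ℕ) : flen (Finsupp.single i c) = c := by
  unfold flen
  exact Finsupp.sum_single_index rfl

lemma fgcd_comm (α β : ℕ →₀ ℕ) : fgcd α β = fgcd β α := by
  ext t
  simp only [fgcd_apply, min_comm]

lemma fdist_comm (α β : ℕ →₀ ℕ) : fdist α β = fdist β α := by
  unfold fdist
  rw [fgcd_comm, max_comm]

lemma fgcd_exch (γ : ℕ →₀ ℕ) {i j : ℕ} (hij : i ≠ j) (a b : ℕ) :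
    fgcd (γ + Finsupp.single i a) (γ + Finsupp.single j b) = γ := by
  ext t
  simp only [fgcd_apply, Finsupp.add_apply, Finsupp.single_apply]
  rcases eq_or_ne i t with rfl | hi
  · rw [if_pos rfl, if_neg (by omega)]
    omega
  · rw [if_neg (by omega)]
    rcases eq_or_ne j t with rfl | hj
    · rw [if_pos rfl]; omega
    · rw [if_neg (by omega)]; omega

lemma fdist_exch (γ : ℕ →₀ ℕ) {i j : ℕ} (hij : i ≠ j) (a b : ℕ) :
    fdist (γ + Finsupp.single i a) (γ + Finsupp.single j b) = max a b := by
  unfold fdist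
  rw [fgcd_exch γ hij a b, flen_add, flen_add, flen_single, flen_single]
  omega

lemma fact_add_single (γ : ℕ →₀ ℕ) (i c : ℕ) :
    IsFactorization r x (γ + Finsupp.single i c) ↔
      (γ.sum fun t c => (c : ℚ) * r ^ t) + (c : ℚ) * r ^ i = x := by
  unfold IsFactorization
  rw [Finsupp.sum_add_index' (fun t => by simp) (fun t c₁ c₂ => by push_cast; ring),
    Finsupp.sum_single_index (by simp)]

lemma fact_exch (h0 : 0 < r) (γ : ℕ →₀ ℕ) (i : ℕ) :
    IsFactorization r x (γ + Finsupp.single i r.num.toNat) ↔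
      IsFactorization r x (γ + Finsupp.single (i+1) r.den) := by
  rw [fact_add_single, fact_add_single, key_rel h0 i]

end Exch

section Chain

variable {r x : ℚ} {N : ℕ}

lemma HasChain.refl {α : ℕ →₀ ℕ} (hα : IsFactorization r x α) : HasChain r x N α α :=
  ⟨0, fun _ => α, rfl, rfl, fun _ => hα, fun i => i.elim0⟩

lemma HasChain.cons {α α' β : ℕ →₀ ℕ} (hα : IsFactorization r x α)
    (hdst : fdist α α' ≤ N) (h : HasChain r x N α' β) : HasChain r x N α β := by
  obtain ⟨k, z, hz0, hzl, hfac, hstep⟩ := h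
  refine ⟨k + 1, Fin.cons α z, by simp, ?_, ?_, ?_⟩
  · rw [← Fin.succ_last, Fin.cons_succ]
    exact hzl
  · intro i
    refine Fin.cases ?_ (fun j => ?_) i
    · simpa using hα
    · rw [Fin.cons_succ]
      exact hfac j
  · intro i
    refine Fin.cases ?_ (fun j => ?_) i
    · rw [Fin.castSucc_zero, Fin.cons_zero, Fin.succ_zero_eq_one]
      have h1 : (1 : Fin (k+2)) = Fin.succ 0 := by
        rw [Fin.succ_zero_eq_one]
      rw [h1, Fin.cons_succ, hz0]
      exact hdst
    · rw [← Fin.succ_castSucc, Fin.cons_succ, Fin.cons_succ]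
      exact hstep j

lemma HasChain.symm {α β : ℕ →₀ ℕ} (h : HasChain r x N α β) : HasChain r x N β α := by
  obtain ⟨k, z, hz0, hzl, hfac, hstep⟩ := h
  refine ⟨k, fun i => z i.rev, ?_, ?_, fun i => hfac _, fun i => ?_⟩
  · show z (Fin.rev 0) = β
    rw [Fin.rev_zero, hzl]
  · show z (Fin.last k).rev = α
    rw [Fin.rev_last, hz0]
  · show fdist (z i.castSucc.rev) (z i.succ.rev) ≤ N
    rw [Fin.rev_castSucc, Fin.rev_succ, fdist_comm]
    exact hstep i.rev

lemma HasChain.snoc {α β γ : ℕ →₀ ℕ} (h : HasChain r x N α β)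
    (hdst : fdist β γ ≤ N) (hγ : IsFactorization r x γ) : HasChain r x N α γ :=
  (HasChain.cons hγ (by rwa [fdist_comm]) h.symm).symm

end Chain
section Measure

/-- Sum of pointwise distances between two factorizations. -/
noncomputable def mdist (α β : ℕ →₀ ℕ) : ℕ :=
  ∑ t ∈ α.support ∪ β.support, ((α t - β t) + (β t - α t))

lemma mdist_eq_sum {α β : ℕ →₀ ℕ} {s : Finset ℕ} (hs : α.support ∪ β.support ⊆ s) :
    mdist α β = ∑ t ∈ s, ((α t - β t) + (β t - α t)) := by
  refine Finset.sum_subset hs (fun t _ ht => ?_)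
  simp only [Finset.mem_union, Finsupp.mem_support_iff, not_or, not_not] at ht
  omega

lemma mdist_comm (α β : ℕ →₀ ℕ) : mdist α β = mdist β α := by
  unfold mdist
  rw [Finset.union_comm]
  exact Finset.sum_congr rfl (fun t _ => by omega)

lemma eq_of_mdist_zero {α β : ℕ →₀ ℕ} (h : mdist α β = 0) : α = β := by
  ext t
  by_cases ht : t ∈ α.support ∪ β.support
  · have := Finset.sum_eq_zero_iff.1 h t ht
    omega
  · simp only [Finset.mem_union, Finsupp.mem_support_iff, not_or, not_not] at ht
    omega

end Measure
section Step

variable {r x : ℚ}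

lemma sub_add_eq (α : ℕ →₀ ℕ) {i c : ℕ} (hc : c ≤ α i) :
    (α - Finsupp.single i c) + Finsupp.single i c = α := by
  ext t
  simp only [Finsupp.add_apply, Finsupp.tsub_apply, Finsupp.single_apply]
  rcases eq_or_ne i t with rfl | hi
  · rw [if_pos rfl]; omega
  · rw [if_neg hi]; omega

lemma sub_apply' (α : ℕ →₀ ℕ) (i c t : ℕ) :
    (α - Finsupp.single i c) t = α t - (if i = t then c else 0) := by
  simp only [Finsupp.tsub_apply, Finsupp.single_apply]

lemma step_up (h0 : 0 < r) (hnd : r.den < r.num.toNat) {α β : ℕ →₀ ℕ}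
    (hfα : IsFactorization r x α) (hfβ : IsFactorization r x β) {i : ℕ}
    (hmin : ∀ t, t < i → α t = β t) (hgt : β i < α i) :
    ∃ α', IsFactorization r x α' ∧ fdist α α' ≤ max r.num.toNat r.den ∧
      mdist α' β < mdist α β := by
  set n := r.num.toNat with hn
  set d := r.den with hdd
  have hdvd : (n : ℤ) ∣ (α i : ℤ) - β i := dvd_min_diff h0 hfα hfβ hmin
  have hle : (n : ℤ) ≤ (α i : ℤ) - β i := Int.le_of_dvd (by omega) hdvd
  have hge : β i + n ≤ α i := by omega
  have hna : n ≤ α i := by omega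
  set γ := α - Finsupp.single i n with hγ
  have hγadd : γ + Finsupp.single i n = α := sub_add_eq α hna
  set α' := γ + Finsupp.single (i+1) d with hα'
  have hval : ∀ t, α' t = if t = i then α t - n else if t = i + 1 then α t + d else α t := by
    intro t
    simp only [hα', Finsupp.add_apply, hγ, sub_apply', Finsupp.single_apply]
    rcases eq_or_ne t i with rfl | h1
    · rw [if_pos rfl, if_pos rfl, if_neg (by omega)]
      omega
    · rw [if_neg h1, if_neg (fun h => h1 h.symm)]
      rcases eq_or_ne t (i+1) with rfl | h2
      · rw [if_pos rfl, if_pos rfl]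
        omega
      · rw [if_neg h2, if_neg (fun h => h2 h.symm)]
        omega
  have hfact' : IsFactorization r x α' := by
    rw [hα']
    exact (fact_exch h0 γ i).1 (by rwa [hγadd])
  have hdist : fdist α α' ≤ max n d := by
    rw [hα', ← hγadd]
    exact le_of_eq (fdist_exch γ (by omega) n d)
  refine ⟨α', hfact', hdist, ?_⟩
  set s : Finset ℕ := insert i (insert (i+1) (α.support ∪ β.support ∪ α'.support)) with hs
  have hsub1 : α'.support ∪ β.support ⊆ s := by
    intro t ht
    simp only [hs, Finset.mem_insert, Finset.mem_union]
    rcases Finset.mem_union.1 ht with h | h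
    · right; right; right; exact h
    · right; right; left; right; exact h
  have hsub2 : α.support ∪ β.support ⊆ s := by
    intro t ht
    simp only [hs, Finset.mem_insert, Finset.mem_union]
    rcases Finset.mem_union.1 ht with h | h
    · right; right; left; left; exact h
    · right; right; left; right; exact h
  have his : i ∈ s := by simp [hs]
  have hi1s : i + 1 ∈ s := by simp [hs]
  have key : ∑ t ∈ s, (((α' t - β t) + (β t - α' t)) + (if t = i then d else 0))
      < ∑ t ∈ s, (((α t - β t) + (β t - α t)) + (if t = i + 1 then d else 0)) := by
    refine Finset.sum_lt_sum (fun t _ => ?_) ⟨i, his, ?_⟩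
    · rw [hval t]
      rcases eq_or_ne t i with rfl | h1
      · rw [if_pos rfl, if_pos rfl, if_neg (by omega)]
        omega
      · rw [if_neg h1, if_neg h1]
        rcases eq_or_ne t (i+1) with rfl | h2
        · rw [if_pos rfl, if_pos rfl]
          omega
        · rw [if_neg h2, if_neg h2]
    · rw [hval i]
      rw [if_pos rfl, if_pos rfl, if_neg (by omega)]
      omega
  have e1 : ∑ t ∈ s, (((α' t - β t) + (β t - α' t)) + (if t = i then d else 0))
      = (∑ t ∈ s, ((α' t - β t) + (β t - α' t))) + d := by
    rw [Finset.sum_add_distrib, Finset.sum_ite_eq' s i (fun _ => d), if_pos his]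
  have e2 : ∑ t ∈ s, (((α t - β t) + (β t - α t)) + (if t = i + 1 then d else 0))
      = (∑ t ∈ s, ((α t - β t) + (β t - α t))) + d := by
    rw [Finset.sum_add_distrib, Finset.sum_ite_eq' s (i+1) (fun _ => d), if_pos hi1s]
  rw [e1, e2] at key
  rw [mdist_eq_sum hsub1, mdist_eq_sum hsub2]
  omega

end Step
section StepDown

variable {r x : ℚ}

lemma step_down (h0 : 0 < r) (hnd : r.num.toNat < r.den) {α β : ℕ →₀ ℕ}
    (hfα : IsFactorization r x α) (hfβ : IsFactorization r x β) {j : ℕ} (hj0 : j ≠ 0)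
    (hmax : ∀ t, j < t → α t = β t) (hgt : β j < α j) :
    ∃ α', IsFactorization r x α' ∧ fdist α α' ≤ max r.num.toNat r.den ∧
      mdist α' β < mdist α β := by
  set n := r.num.toNat with hn
  set d := r.den with hdd
  obtain ⟨m, rfl⟩ : ∃ m, j = m + 1 := ⟨j - 1, by omega⟩
  have hdvd : (d : ℤ) ∣ (α (m+1) : ℤ) - β (m+1) := dvd_max_diff h0 hfα hfβ hmax
  have hle : (d : ℤ) ≤ (α (m+1) : ℤ) - β (m+1) := Int.le_of_dvd (by omega) hdvd
  have hge : β (m+1) + d ≤ α (m+1) := by omega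
  have hna : d ≤ α (m+1) := by omega
  set γ := α - Finsupp.single (m+1) d with hγ
  have hγadd : γ + Finsupp.single (m+1) d = α := sub_add_eq α hna
  set α' := γ + Finsupp.single m n with hα'
  have hval : ∀ t, α' t = if t = m + 1 then α t - d else if t = m then α t + n else α t := by
    intro t
    simp only [hα', Finsupp.add_apply, hγ, sub_apply', Finsupp.single_apply]
    rcases eq_or_ne t (m+1) with rfl | h1
    · rw [if_pos rfl, if_pos rfl, if_neg (by omega)]
      omega
    · rw [if_neg h1, if_neg (fun h => h1 h.symm)]
      rcases eq_or_ne t m with rfl | h2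
      · rw [if_pos rfl, if_pos rfl]
        omega
      · rw [if_neg h2, if_neg (fun h => h2 h.symm)]
        omega
  have hfact' : IsFactorization r x α' := by
    rw [hα']
    exact (fact_exch h0 γ m).2 (by rwa [hγadd])
  have hdist : fdist α α' ≤ max n d := by
    rw [hα', ← hγadd]
    rw [max_comm]
    exact le_of_eq (fdist_exch γ (by omega) d n)
  refine ⟨α', hfact', hdist, ?_⟩
  set s : Finset ℕ := insert m (insert (m+1) (α.support ∪ β.support ∪ α'.support)) with hs
  have hsub1 : α'.support ∪ β.support ⊆ s := by
    intro t ht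
    simp only [hs, Finset.mem_insert, Finset.mem_union]
    rcases Finset.mem_union.1 ht with h | h
    · right; right; right; exact h
    · right; right; left; right; exact h
  have hsub2 : α.support ∪ β.support ⊆ s := by
    intro t ht
    simp only [hs, Finset.mem_insert, Finset.mem_union]
    rcases Finset.mem_union.1 ht with h | h
    · right; right; left; left; exact h
    · right; right; left; right; exact h
  have his : m ∈ s := by simp [hs]
  have hi1s : m + 1 ∈ s := by simp [hs]
  have key : ∑ t ∈ s, (((α' t - β t) + (β t - α' t)) + (if t = m + 1 then n else 0))
      < ∑ t ∈ s, (((α t - β t) + (β t - α t)) + (if t = m then n else 0)) := by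
    refine Finset.sum_lt_sum (fun t _ => ?_) ⟨m + 1, hi1s, ?_⟩
    · rw [hval t]
      rcases eq_or_ne t (m+1) with rfl | h1
      · rw [if_pos rfl, if_pos rfl, if_neg (by omega)]
        omega
      · rw [if_neg h1, if_neg h1]
        rcases eq_or_ne t m with rfl | h2
        · rw [if_pos rfl, if_pos rfl]
          omega
        · rw [if_neg h2, if_neg h2]
    · rw [hval (m+1)]
      rw [if_pos rfl, if_pos rfl, if_neg (by omega)]
      omega
  have e1 : ∑ t ∈ s, (((α' t - β t) + (β t - α' t)) + (if t = m + 1 then n else 0))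
      = (∑ t ∈ s, ((α' t - β t) + (β t - α' t))) + n := by
    rw [Finset.sum_add_distrib, Finset.sum_ite_eq' s (m+1) (fun _ => n), if_pos hi1s]
  have e2 : ∑ t ∈ s, (((α t - β t) + (β t - α t)) + (if t = m then n else 0))
      = (∑ t ∈ s, ((α t - β t) + (β t - α t))) + n := by
    rw [Finset.sum_add_distrib, Finset.sum_ite_eq' s m (fun _ => n), if_pos his]
  rw [e1, e2] at key
  rw [mdist_eq_sum hsub1, mdist_eq_sum hsub2]
  omega

end StepDown
section Connect

variable {r x : ℚ}

lemma n_ne_d (h0 : 0 < r) (hd1 : r.den ≠ 1) : r.num.toNat ≠ r.den := by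
  intro h
  have hc := coprime_nd h0
  rw [h] at hc
  exact hd1 ((Nat.coprime_self _).1 hc)

/-- The set of indices where two factorizations differ. -/
noncomputable def DiffSet (α β : ℕ →₀ ℕ) : Finset ℕ :=
  (α.support ∪ β.support).filter (fun t => α t ≠ β t)

lemma mem_DiffSet {α β : ℕ →₀ ℕ} {t : ℕ} : t ∈ DiffSet α β ↔ α t ≠ β t := by
  simp only [DiffSet, Finset.mem_filter, Finset.mem_union, Finsupp.mem_support_iff]
  constructor
  · exact fun h => h.2
  · intro h
    refine ⟨?_, h⟩
    by_contra hc
    push_neg at hc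
    omega

lemma DiffSet_nonempty {α β : ℕ →₀ ℕ} (hne : α ≠ β) : (DiffSet α β).Nonempty := by
  obtain ⟨t, ht⟩ := Finsupp.ne_iff.1 hne
  exact ⟨t, mem_DiffSet.2 ht⟩

lemma exists_step (h0 : 0 < r) (hd1 : r.den ≠ 1) {α β : ℕ →₀ ℕ}
    (hfα : IsFactorization r x α) (hfβ : IsFactorization r x β) (hne : α ≠ β) :
    (∃ α', IsFactorization r x α' ∧ fdist α α' ≤ max r.num.toNat r.den ∧
      mdist α' β < mdist α β) ∨
    (∃ β', IsFactorization r x β' ∧ fdist β β' ≤ max r.num.toNat r.den ∧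
      mdist β' α < mdist α β) := by
  have hDne := DiffSet_nonempty hne
  rcases Ne.lt_or_gt (n_ne_d h0 hd1) with hnd | hnd
  · -- n < d : use the maximal differing index
    set j := (DiffSet α β).max' hDne with hj
    have hmax : ∀ t, j < t → α t = β t := by
      intro t ht
      by_contra h
      exact absurd ((DiffSet α β).le_max' t (mem_DiffSet.2 h)) (not_le.2 ht)
    have hjd : α j ≠ β j := mem_DiffSet.1 ((DiffSet α β).max'_mem hDne)
    have hj0 : j ≠ 0 := by
      rintro hj0
      rw [hj0] at hmax
      exact hne (eq_of_agree_pos hfα hfβ hmax)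
    rcases Nat.lt_or_ge (β j) (α j) with hgt | hge
    · exact Or.inl (step_down h0 hnd hfα hfβ hj0 hmax hgt)
    · have hgt' : α j < β j := by omega
      obtain ⟨β', h1, h2, h3⟩ := step_down h0 hnd hfβ hfα hj0
        (fun t ht => (hmax t ht).symm) hgt'
      rw [mdist_comm α β]
      exact Or.inr ⟨β', h1, h2, h3⟩
  · -- d < n : use the minimal differing index
    set i := (DiffSet α β).min' hDne with hi
    have hmin : ∀ t, t < i → α t = β t := by
      intro t ht
      by_contra h
      exact absurd ((DiffSet α β).min'_le t (mem_DiffSet.2 h)) (not_le.2 ht)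
    have hid : α i ≠ β i := mem_DiffSet.1 ((DiffSet α β).min'_mem hDne)
    rcases Nat.lt_or_ge (β i) (α i) with hgt | hge
    · exact Or.inl (step_up h0 hnd hfα hfβ hmin hgt)
    · have hgt' : α i < β i := by omega
      obtain ⟨β', h1, h2, h3⟩ := step_up h0 hnd hfβ hfα
        (fun t ht => (hmin t ht).symm) hgt'
      rw [mdist_comm α β]
      exact Or.inr ⟨β', h1, h2, h3⟩

lemma chain_exists (h0 : 0 < r) (hd1 : r.den ≠ 1) (α β : ℕ →₀ ℕ)
    (hfα : IsFactorization r x α) (hfβ : IsFactorization r x β) :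
    HasChain r x (max r.num.toNat r.den) α β := by
  suffices H : ∀ M (α β : ℕ →₀ ℕ), mdist α β ≤ M → IsFactorization r x α →
      IsFactorization r x β → HasChain r x (max r.num.toNat r.den) α β from
    H (mdist α β) α β le_rfl hfα hfβ
  intro M
  induction M with
  | zero =>
    intro α β hm h1 h2
    have : α = β := eq_of_mdist_zero (Nat.le_zero.1 hm)
    subst this
    exact HasChain.refl h1
  | succ M ih =>
    intro α β hm h1 h2
    by_cases hne : α = β
    · subst hne; exact HasChain.refl h1
    · rcases exists_step h0 hd1 h1 h2 hne with ⟨α', hf, hd', hm'⟩ | ⟨β', hf, hd', hm'⟩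
      · exact HasChain.cons h1 hd' (ih α' β (by omega) hf h2)
      · exact ((HasChain.cons h2 hd' (ih β' α (by omega) hf h1)).symm)

lemma flen_sub_fgcd (α β : ℕ →₀ ℕ) :
    flen α - flen (fgcd α β) = ∑ t ∈ α.support ∪ β.support, (α t - β t) := by
  have h1 : flen α = ∑ t ∈ α.support ∪ β.support, α t :=
    flen_eq_sum Finset.subset_union_left
  have h2 : flen (fgcd α β) = ∑ t ∈ α.support ∪ β.support, min (α t) (β t) :=
    flen_eq_sum (fgcd_support α β)
  have h3 : ∑ t ∈ α.support ∪ β.support, min (α t) (β t)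
      + ∑ t ∈ α.support ∪ β.support, (α t - β t) = ∑ t ∈ α.support ∪ β.support, α t := by
    rw [← Finset.sum_add_distrib]
    exact Finset.sum_congr rfl (fun t _ => by omega)
  omega

lemma fdist_ge (h0 : 0 < r) (hd1 : r.den ≠ 1) {α β : ℕ →₀ ℕ}
    (hfα : IsFactorization r x α) (hfβ : IsFactorization r x β) (hne : α ≠ β) :
    max r.num.toNat r.den ≤ fdist α β := by
  have hDne := DiffSet_nonempty hne
  have hterm : ∀ (α β : ℕ →₀ ℕ) (t : ℕ), α t ≠ β t →
      α t - β t ≤ flen α - flen (fgcd α β) := by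
    intro α β t ht
    rw [flen_sub_fgcd]
    refine Finset.single_le_sum (f := fun t => α t - β t) (fun _ _ => Nat.zero_le _) ?_
    simp only [Finset.mem_union, Finsupp.mem_support_iff]
    by_contra hc
    push_neg at hc
    omega
  rcases Ne.lt_or_gt (n_ne_d h0 hd1) with hnd | hnd
  · -- n < d : max = d, use maximal differing index
    set j := (DiffSet α β).max' hDne with hj
    have hmax : ∀ t, j < t → α t = β t := by
      intro t ht
      by_contra h
      exact absurd ((DiffSet α β).le_max' t (mem_DiffSet.2 h)) (not_le.2 ht)
    have hjd : α j ≠ β j := mem_DiffSet.1 ((DiffSet α β).max'_mem hDne)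
    have hdvd : (r.den : ℤ) ∣ (α j : ℤ) - β j := dvd_max_diff h0 hfα hfβ hmax
    have hmd : max r.num.toNat r.den = r.den := by omega
    rw [hmd]
    unfold fdist
    rcases Nat.lt_or_ge (β j) (α j) with hgt | hge
    · have hle : (r.den : ℤ) ≤ (α j : ℤ) - β j := Int.le_of_dvd (by omega) hdvd
      have := hterm α β j hjd
      omega
    · have hgt' : α j < β j := by omega
      have hle : (r.den : ℤ) ≤ (β j : ℤ) - α j :=
        Int.le_of_dvd (by omega) (dvd_sub_comm.1 hdvd)
      have := hterm β α j (Ne.symm hjd)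
      rw [fgcd_comm β α] at this
      omega
  · -- d < n : max = n, use minimal differing index
    set i := (DiffSet α β).min' hDne with hi
    have hmin : ∀ t, t < i → α t = β t := by
      intro t ht
      by_contra h
      exact absurd ((DiffSet α β).min'_le t (mem_DiffSet.2 h)) (not_le.2 ht)
    have hid : α i ≠ β i := mem_DiffSet.1 ((DiffSet α β).min'_mem hDne)
    have hdvd : (r.num.toNat : ℤ) ∣ (α i : ℤ) - β i := dvd_min_diff h0 hfα hfβ hmin
    have hmd : max r.num.toNat r.den = r.num.toNat := by omega
    rw [hmd]
    unfold fdist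
    rcases Nat.lt_or_ge (β i) (α i) with hgt | hge
    · have hle : (r.num.toNat : ℤ) ≤ (α i : ℤ) - β i := Int.le_of_dvd (by omega) hdvd
      have := hterm α β i hid
      omega
    · have hgt' : α i < β i := by omega
      have hle : (r.num.toNat : ℤ) ≤ (β i : ℤ) - α i :=
        Int.le_of_dvd (by omega) (dvd_sub_comm.1 hdvd)
      have := hterm β α i (Ne.symm hid)
      rw [fgcd_comm β α] at this
      omega

end Connect
section Catenary

variable {r x : ℚ}

lemma catenary_le (h0 : 0 < r) (hd1 : r.den ≠ 1) (x : ℚ) :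
    catenary r x ≤ ((max r.num.toNat r.den : ℕ) : ℕ∞) :=
  sInf_le ⟨max r.num.toNat r.den, rfl, fun α β h1 h2 => chain_exists h0 hd1 α β h1 h2⟩

lemma exists_ne_step {X : Type*} {k : ℕ} {z : Fin (k+1) → X}
    (h : z 0 ≠ z (Fin.last k)) : ∃ i : Fin k, z i.castSucc ≠ z i.succ := by
  by_contra hc
  push_neg at hc
  apply h
  have : ∀ j : Fin (k+1), z j = z 0 := by
    intro j
    induction j using Fin.induction with
    | zero => rfl
    | succ i ih => rw [← hc i, ih]
  exact (this (Fin.last k)).symm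

lemma catenary_ge (h0 : 0 < r) (hd1 : r.den ≠ 1) {α β : ℕ →₀ ℕ}
    (h1 : IsFactorization r x α) (h2 : IsFactorization r x β) (hne : α ≠ β) :
    ((max r.num.toNat r.den : ℕ) : ℕ∞) ≤ catenary r x := by
  refine le_sInf ?_
  rintro N ⟨m, rfl, hchain⟩
  obtain ⟨k, z, hz0, hzl, hfac, hstep⟩ := hchain α β h1 h2
  have hne' : z 0 ≠ z (Fin.last k) := by rw [hz0, hzl]; exact hne
  obtain ⟨i, hi⟩ := exists_ne_step hne'
  have hge := fdist_ge h0 hd1 (hfac _) (hfac _) hi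
  have hle := hstep i
  exact_mod_cast Nat.cast_le.2 (le_trans hge hle)

lemma catenary_zero_of_unique (x : ℚ)
    (h : ∀ α β : ℕ →₀ ℕ, IsFactorization r x α → IsFactorization r x β → α = β) :
    catenary r x = 0 := by
  refine le_antisymm (sInf_le ⟨0, rfl, fun α β h1 h2 => ?_⟩) zero_le
  have e := h α β h1 h2
  subst e
  exact HasChain.refl h1

end Catenary
theorem stmt4 (r : ℚ) (h0 : 0 < r) (hd : r.den ≠ 1) (hn : 1 < r.num) :
    (⨆ x ∈ S r, catenary r x) = ((max r.num.toNat r.den : ℕ) : ℕ∞) ∧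
    ∀ x ∈ S r, 0 < catenary r x → catenary r x = ((max r.num.toNat r.den : ℕ) : ℕ∞) := by
  have hn1 : 1 < r.num.toNat := by omega
  -- the witness element with two factorizations
  set x₀ : ℚ := (r.num.toNat : ℚ) with hx₀def
  have hone : (1 : ℚ) ∈ S r := AddSubmonoid.subset_closure ⟨0, (pow_zero r).symm⟩
  have hx₀mem : x₀ ∈ S r := by
    have h2 := nsmul_mem hone r.num.toNat
    rwa [nsmul_eq_mul, mul_one] at h2
  have hfα : IsFactorization r x₀ (Finsupp.single 0 r.num.toNat) := by
    unfold IsFactorization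
    rw [Finsupp.sum_single_index (by simp), pow_zero, mul_one]
  have hfβ : IsFactorization r x₀ (Finsupp.single 1 r.den) := by
    unfold IsFactorization
    rw [Finsupp.sum_single_index (by simp), pow_one, r_eq h0]
  have hne : (Finsupp.single 0 r.num.toNat : ℕ →₀ ℕ) ≠ Finsupp.single 1 r.den := by
    intro hcontra
    have h00 := DFunLike.congr_fun hcontra 0
    simp [Finsupp.single_apply] at h00
    exact absurd h00 (not_le.2 h0)
  have hge := catenary_ge h0 hd hfα hfβ hne
  constructor
  · apply le_antisymm
    · exact iSup₂_le (fun x _ => catenary_le h0 hd x)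
    · exact le_trans hge (le_iSup₂ (f := fun x _ => catenary r x) x₀ hx₀mem)
  · intro x hx hpos
    by_cases hu : ∀ α β : ℕ →₀ ℕ, IsFactorization r x α → IsFactorization r x β → α = β
    · rw [catenary_zero_of_unique x hu] at hpos
      exact absurd hpos (lt_irrefl 0)
    · push_neg at hu
      obtain ⟨α, β, h1, h2, hne'⟩ := hu
      exact le_antisymm (catenary_le h0 hd x) (catenary_ge h0 hd h1 h2 hne')
end
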